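/- Let λ ⊆ μ be partitions such that μ/λ is a horizontal strip, and let a be a positive integer with a ≤ |μ/λ|. Then ∑_{ν} (−1)^{|ν/λ|−a} · C(r(ν/λ)−1, |ν/λ|−a) = 1, where the sum ranges over all partitions ν with λ ⊆ ν ⊆ μ such that ν/λ is a horizontal strip and a ≤ |ν/λ|, and C(m,k) denotes the ordinary binomial coefficient (note r(ν/λ) ≥ 1 for each such ν, so r(ν/λ)−1 ∈ ℕ). -/

import Mathlib

open Finset Finsupp



/-- A partition: an antitone, eventually-zero function `ℕ → ℕ`
(row `i+1` of the usual 1-indexed partition is `f i`). -/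
def IsPartition (f : ℕ → ℕ) : Prop :=
  (∀ i, f (i + 1) ≤ f i) ∧ ∃ N, ∀ i, N ≤ i → f i = 0

/-- `u/l` is a horizontal strip: `l ⊆ u` and `u (i+1) ≤ l i` for all rows. -/
def IsHStrip (l u : ℕ → ℕ) : Prop :=
  (∀ i, l i ≤ u i) ∧ ∀ i, u (i + 1) ≤ l i

/-- The size `|u/l| = ∑_i (u i − l i)` of a skew shape. -/
noncomputable def stripSize (l u : ℕ → ℕ) : ℕ := ∑ᶠ i, (u i - l i)

/-- The number of rows `r(u/l) = #{i : l i < u i}` of a skew shape. -/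
noncomputable def stripRows (l u : ℕ → ℕ) : ℕ := {i | l i < u i}.ncard



/-- Sum of the entries of a finitely supported function. -/
def fsum (c : ℕ →₀ ℕ) : ℕ := c.sum fun _ n => n

lemma fsum_add (c d : ℕ →₀ ℕ) : fsum (c + d) = fsum c + fsum d :=
  Finsupp.sum_add_index' (fun _ => rfl) (fun _ _ _ => rfl)

lemma fsum_single (j t : ℕ) : fsum (Finsupp.single j t) = t :=
  Finsupp.sum_single_index rfl

lemma fsum_eq_sum_support (c : ℕ →₀ ℕ) : fsum c = ∑ i ∈ c.support, c i := rfl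

lemma card_support_single_add (j t : ℕ) (c : ℕ →₀ ℕ) (hj : c j = 0) (ht : t ≠ 0) :
    (Finsupp.single j t + c).support.card = c.support.card + 1 := by
  have hdis : Disjoint (Finsupp.single j t).support c.support := by
    rw [Finsupp.support_single_ne_zero _ ht]
    simp [Finset.disjoint_singleton_left, Finsupp.mem_support_iff, hj]
  rw [Finsupp.support_add_eq hdis, Finset.card_union_of_disjoint hdis,
    Finsupp.support_single_ne_zero _ ht]
  simp [Nat.add_comm]

lemma sum_Iic_single_add {M : Type*} [AddCommMonoid M] (j b : ℕ) (f : ℕ →₀ ℕ) (hj : f j = 0)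
    (g : (ℕ →₀ ℕ) → M) :
    ∑ c ∈ Finset.Iic (Finsupp.single j b + f), g c
      = ∑ t ∈ Finset.range (b + 1), ∑ c ∈ Finset.Iic f, g (Finsupp.single j t + c) := by
  rw [← Finset.sum_product']
  refine Finset.sum_bij' (fun c _ => (c j, c.erase j)) (fun p _ => Finsupp.single j p.1 + p.2)
      ?_ ?_ ?_ ?_ ?_
  · intro c hc
    rw [Finset.mem_Iic] at hc
    have hc' := Finsupp.le_def.mp hc
    simp only [Finset.mem_product, Finset.mem_range, Finset.mem_Iic]
    constructor
    · have := hc' j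
      simp [hj] at this
      omega
    · rw [Finsupp.le_def]
      intro i
      by_cases hij : i = j
      · subst hij; simp [Finsupp.erase_same]
      · have := hc' i
        simp [Finsupp.erase_ne hij, Finsupp.single_eq_of_ne' (fun h => hij h.symm)] at this ⊢
        exact this
  · intro p hp
    simp only [Finset.mem_product, Finset.mem_range, Finset.mem_Iic] at hp
    rw [Finset.mem_Iic, Finsupp.le_def]
    intro i
    by_cases hij : i = j
    · subst hij
      have : p.2 i ≤ f i := Finsupp.le_def.mp hp.2 i
      simp [hj] at this ⊢
      omega
    · have : p.2 i ≤ f i := Finsupp.le_def.mp hp.2 i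
      simp [Finsupp.single_eq_of_ne' (fun h => hij h.symm)]
      omega
  · intro c hc
    exact Finsupp.single_add_erase j c
  · intro p hp
    simp only [Finset.mem_product, Finset.mem_range, Finset.mem_Iic] at hp
    have hp2j : p.2 j = 0 := by
      have := Finsupp.le_def.mp hp.2 j
      omega
    ext i
    · simp [hp2j]
    · by_cases hij : i = j
      · subst hij; simp [Finsupp.erase_same, hp2j]
      · simp [Finsupp.erase_ne hij, Finsupp.single_eq_of_ne' (fun h => hij h.symm)]
  · intro c hc
    rw [Finsupp.single_add_erase]

/-- Auxiliary summand (no "−1" on the rows). -/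
def termH (s : ℤ) (c : ℕ →₀ ℕ) : ℤ :=
  if s ≤ (fsum c : ℤ) then
    (-1) ^ (((fsum c : ℤ) - s).toNat) *
      ((c.support.card).choose (((fsum c : ℤ) - s).toNat) : ℤ)
  else 0

/-- The summand of the main identity. -/
def termF (a : ℕ) (c : ℕ →₀ ℕ) : ℤ :=
  if a ≤ fsum c then
    (-1) ^ (fsum c - a) * (((c.support.card - 1).choose (fsum c - a)) : ℤ)
  else 0

lemma termH_single_add (s : ℤ) (j t : ℕ) (ht : t ≠ 0) (c : ℕ →₀ ℕ) (hj : c j = 0) :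
    termH s (Finsupp.single j t + c) = termH (s - t) c - termH (s - t + 1) c := by
  have h1 : fsum (Finsupp.single j t + c) = t + fsum c := by rw [fsum_add, fsum_single]
  have h2 : (Finsupp.single j t + c).support.card = c.support.card + 1 :=
    card_support_single_add j t c hj ht
  set n := fsum c with hn
  set r := c.support.card with hr
  unfold termH
  rw [h1, h2]
  rcases lt_trichotomy s ((t : ℤ) + n) with hlt | heq | hgt
  · -- s ≤ n+t−1 : Pascal
    have c1 : s ≤ ((t + n : ℕ) : ℤ) := by push_cast; omega
    have c2 : s - t ≤ (n : ℤ) := by omega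
    have c3 : s - t + 1 ≤ (n : ℤ) := by omega
    rw [if_pos c1, if_pos c2, if_pos c3]
    set k' : ℕ := ((n : ℤ) - (s - t + 1)).toNat with hk'
    have e1 : (((t + n : ℕ) : ℤ) - s).toNat = k' + 1 := by push_cast; omega
    have e2 : ((n : ℤ) - (s - t)).toNat = k' + 1 := by omega
    rw [e1, e2]
    rw [Nat.choose_succ_succ]
    push_cast
    ring
  · -- s = n + t
    have c1 : s ≤ ((t + n : ℕ) : ℤ) := by push_cast; omega
    have c2 : s - t ≤ (n : ℤ) := by omega
    have c3 : ¬ (s - t + 1 ≤ (n : ℤ)) := by omega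
    rw [if_pos c1, if_pos c2, if_neg c3]
    have e1 : (((t + n : ℕ) : ℤ) - s).toNat = 0 := by push_cast; omega
    have e2 : ((n : ℤ) - (s - t)).toNat = 0 := by omega
    rw [e1, e2]
    simp
  · -- s > n + t
    have c1 : ¬ (s ≤ ((t + n : ℕ) : ℤ)) := by push_cast; omega
    have c2 : ¬ (s - t ≤ (n : ℤ)) := by omega
    have c3 : ¬ (s - t + 1 ≤ (n : ℤ)) := by omega
    rw [if_neg c1, if_neg c2, if_neg c3]
    ring

lemma termF_single_add (a : ℕ) (j t : ℕ) (ht : t ≠ 0) (c : ℕ →₀ ℕ) (hj : c j = 0) :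
    termF a (Finsupp.single j t + c) = termH ((a : ℤ) - t) c := by
  have h1 : fsum (Finsupp.single j t + c) = t + fsum c := by rw [fsum_add, fsum_single]
  have h2 : (Finsupp.single j t + c).support.card = c.support.card + 1 :=
    card_support_single_add j t c hj ht
  set n := fsum c with hn
  unfold termF termH
  rw [h1, h2]
  by_cases hc : a ≤ t + n
  · have c1 : (a : ℤ) - t ≤ (n : ℤ) := by omega
    rw [if_pos hc, if_pos c1]
    have e1 : t + n - a = ((n : ℤ) - ((a : ℤ) - t)).toNat := by omega
    rw [e1]
    simp [hn]
  · have c1 : ¬ ((a : ℤ) - t ≤ (n : ℤ)) := by omega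
    rw [if_neg hc, if_neg c1]

lemma Hlem (m : ℕ →₀ ℕ) : ∀ s : ℤ,
    ∑ c ∈ Finset.Iic m, termH s c = if s = (fsum m : ℤ) then 1 else 0 := by
  induction m using Finsupp.induction with
  | zero =>
    intro s
    have hIic : (Finset.Iic (0 : ℕ →₀ ℕ)) = {0} := by
      ext c; simp [Finset.mem_Iic]
    rw [hIic, Finset.sum_singleton]
    unfold termH
    have h0 : fsum 0 = 0 := rfl
    rw [h0]
    simp only [Finsupp.support_zero, Finset.card_empty, Nat.cast_zero]
    rcases lt_trichotomy s 0 with hlt | heq | hgt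
    · rw [if_pos (by omega), if_neg (by omega)]
      have : ((0 : ℤ) - s).toNat ≠ 0 := by omega
      obtain ⟨k, hk⟩ := Nat.exists_eq_succ_of_ne_zero this
      rw [hk, Nat.choose_zero_succ]
      simp
    · subst heq; simp
    · rw [if_neg (by omega), if_neg (by omega)]
  | single_add j b f hjf hb ih =>
    intro s
    have hfj : f j = 0 := Finsupp.notMem_support_iff.mp hjf
    rw [sum_Iic_single_add j b f hfj (termH s), Finset.sum_range_succ']
    have hT0 : ∑ c ∈ Finset.Iic f, termH s (Finsupp.single j 0 + c)
        = if s = (fsum f : ℤ) then 1 else 0 := by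
      simp only [Finsupp.single_zero, zero_add]
      exact ih s
    have hTt : ∀ i ∈ Finset.range b, ∑ c ∈ Finset.Iic f, termH s (Finsupp.single j (i + 1) + c)
        = (if s - (i + 1) = (fsum f : ℤ) then 1 else 0)
          - (if s - i = (fsum f : ℤ) then 1 else 0) := by
      intro i _
      have : ∀ c ∈ Finset.Iic f, termH s (Finsupp.single j (i + 1) + c)
          = termH (s - (i + 1)) c - termH (s - (i + 1) + 1) c := by
        intro c hc
        have hcj : c j = 0 := by
          have := Finsupp.le_def.mp (Finset.mem_Iic.mp hc) j
          omega
        exact termH_single_add s j (i + 1) (Nat.succ_ne_zero i) c hcj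
      rw [Finset.sum_congr rfl this, Finset.sum_sub_distrib, ih, ih]
      have : s - (i + 1) + 1 = s - i := by ring
      rw [this]
    rw [Finset.sum_congr rfl hTt, hT0]
    have tele : ∑ i ∈ Finset.range b,
        ((if s - ((i : ℤ) + 1) = (fsum f : ℤ) then (1 : ℤ) else 0)
          - (if s - i = (fsum f : ℤ) then 1 else 0))
        = (if s - b = (fsum f : ℤ) then 1 else 0) - (if s - 0 = (fsum f : ℤ) then 1 else 0) := by
      have := Finset.sum_range_sub (fun i : ℕ => if s - i = (fsum f : ℤ) then (1 : ℤ) else 0) b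
      simpa using this
    rw [tele]
    have hsum : fsum (Finsupp.single j b + f) = b + fsum f := by rw [fsum_add, fsum_single]
    rw [hsum]
    have hiff : (s = ((b + fsum f : ℕ) : ℤ)) ↔ (s - b = (fsum f : ℤ)) := by push_cast; omega
    simp only [sub_zero]
    split_ifs <;> omega

lemma count_lem (X : ℕ) (C : ℕ) (b : ℕ) :
    ∑ i ∈ Finset.range b, (if (X : ℤ) - ((i : ℤ) + 1) = (C : ℤ) then (1 : ℤ) else 0)
      = if C < X ∧ X ≤ C + b then 1 else 0 := by
  induction b with
  | zero => simp
  | succ b ih =>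
    rw [Finset.sum_range_succ, ih]
    split_ifs <;> omega

lemma Flem (m : ℕ →₀ ℕ) (a : ℕ) (ha : 0 < a) :
    ∑ c ∈ Finset.Iic m, termF a c = if a ≤ fsum m then 1 else 0 := by
  induction m using Finsupp.induction with
  | zero =>
    have hIic : (Finset.Iic (0 : ℕ →₀ ℕ)) = {0} := by
      ext c; simp [Finset.mem_Iic]
    rw [hIic, Finset.sum_singleton]
    unfold termF
    have h0 : fsum 0 = 0 := rfl
    rw [h0, if_neg (by omega), if_neg (by omega)]
  | single_add j b f hjf hb ih =>
    have hfj : f j = 0 := Finsupp.notMem_support_iff.mp hjf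
    rw [sum_Iic_single_add j b f hfj (termF a), Finset.sum_range_succ']
    have hT0 : ∑ c ∈ Finset.Iic f, termF a (Finsupp.single j 0 + c)
        = if a ≤ fsum f then 1 else 0 := by
      simp only [Finsupp.single_zero, zero_add]
      exact ih
    have hTt : ∀ i ∈ Finset.range b, ∑ c ∈ Finset.Iic f, termF a (Finsupp.single j (i + 1) + c)
        = (if (a : ℤ) - ((i : ℤ) + 1) = (fsum f : ℤ) then 1 else 0) := by
      intro i _
      have : ∀ c ∈ Finset.Iic f, termF a (Finsupp.single j (i + 1) + c)
          = termH ((a : ℤ) - (i + 1)) c := by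
        intro c hc
        have hcj : c j = 0 := by
          have := Finsupp.le_def.mp (Finset.mem_Iic.mp hc) j
          omega
        exact termF_single_add a j (i + 1) (Nat.succ_ne_zero i) c hcj
      rw [Finset.sum_congr rfl this, Hlem]
    rw [Finset.sum_congr rfl hTt, hT0]
    have : ∑ i ∈ Finset.range b,
        (if (a : ℤ) - ((i : ℤ) + 1) = (fsum f : ℤ) then (1 : ℤ) else 0)
        = if fsum f < a ∧ a ≤ fsum f + b then 1 else 0 := count_lem a (fsum f) b
    rw [this]
    have hsum : fsum (Finsupp.single j b + f) = b + fsum f := by rw [fsum_add, fsum_single]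
    rw [hsum]
    split_ifs <;> omega

/-- Lemma 3 (1), rephrased: for a horizontal strip `μ/λ` and `0 < a ≤ |μ/λ|`,
`∑_ν (−1)^{|ν/λ|−a} C(r(ν/λ)−1, |ν/λ|−a) = 1`, the sum being over all partitions
`ν` with `λ ⊆ ν ⊆ μ`, `ν/λ` a horizontal strip and `a ≤ |ν/λ|`. -/
theorem hstrip_mobius_sum_ge
    (lam mu : ℕ → ℕ) (hlam : IsPartition lam) (hmu : IsPartition mu)
    (hstrip : IsHStrip lam mu) (a : ℕ) (ha : 0 < a) (haM : a ≤ stripSize lam mu) :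
    (∑ᶠ nu ∈ {nu : ℕ → ℕ | IsPartition nu ∧ (∀ i, nu i ≤ mu i) ∧
        IsHStrip lam nu ∧ a ≤ stripSize lam nu},
      (-1 : ℤ) ^ (stripSize lam nu - a) *
        ((stripRows lam nu - 1).choose (stripSize lam nu - a) : ℤ)) = 1 := by
  classical
  obtain ⟨N, hN⟩ := hmu.2
  have hlamN : ∀ i, N ≤ i → lam i = 0 := fun i hi =>
    Nat.le_antisymm (by rw [← hN i hi]; exact hstrip.1 i) (Nat.zero_le _)
  -- the Finsupp of row differences
  set m : ℕ →₀ ℕ := Finsupp.onFinset (Finset.range N) (fun i => mu i - lam i)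
    (by
      intro i hi
      rw [Finset.mem_range]
      by_contra h
      push_neg at h
      apply hi
      show mu i - lam i = 0
      rw [hN i h, hlamN i h]) with hm
  have hmapp : ∀ i, m i = mu i - lam i := fun i => rfl
  have hmuadd : ∀ i, lam i + m i = mu i := by
    intro i
    rw [hmapp]
    exact Nat.add_sub_cancel' (hstrip.1 i)
  -- the embedding of difference vectors into partitions
  set e : (ℕ →₀ ℕ) → (ℕ → ℕ) := fun c i => lam i + c i with he
  -- key computations for c ≤ m
  have hsize : ∀ c : ℕ →₀ ℕ, stripSize lam (e c) = fsum c := by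
    intro c
    have h1 : (fun i => e c i - lam i) = fun i => c i := by
      funext i; simp [he]
    unfold stripSize
    rw [h1]
    have hsupp : Function.support (fun i => c i) ⊆ (c.support : Set ℕ) := by
      intro i hi
      simpa [Finsupp.mem_support_iff] using hi
    rw [finsum_eq_sum_of_support_subset _ (by exact_mod_cast hsupp)]
    rfl
  have hrows : ∀ c : ℕ →₀ ℕ, stripRows lam (e c) = c.support.card := by
    intro c
    unfold stripRows
    have h1 : {i | lam i < e c i} = (c.support : Set ℕ) := by
      ext i
      simp [he, Finsupp.mem_support_iff]
      omega
    rw [h1, Set.ncard_coe_finset]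
  have hEc : ∀ c : ℕ →₀ ℕ, c ≤ m →
      IsPartition (e c) ∧ (∀ i, e c i ≤ mu i) ∧ IsHStrip lam (e c) := by
    intro c hc
    have hc' := Finsupp.le_def.mp hc
    have hle : ∀ i, e c i ≤ mu i := by
      intro i
      calc e c i = lam i + c i := rfl
        _ ≤ lam i + m i := by have := hc' i; omega
        _ = mu i := hmuadd i
    refine ⟨⟨?_, ?_⟩, hle, ?_, ?_⟩
    · intro i
      calc e c (i + 1) ≤ mu (i + 1) := hle (i + 1)
        _ ≤ lam i := hstrip.2 i
        _ ≤ e c i := Nat.le_add_right _ _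
    · refine ⟨N, fun i hi => ?_⟩
      have h1 := hle i
      rw [hN i hi] at h1
      omega
    · intro i; exact Nat.le_add_right _ _
    · intro i
      calc e c (i + 1) ≤ mu (i + 1) := hle (i + 1)
        _ ≤ lam i := hstrip.2 i
  -- the set equality
  set T : Finset (ℕ →₀ ℕ) := (Finset.Iic m).filter (fun c => a ≤ fsum c) with hT
  have hset : {nu : ℕ → ℕ | IsPartition nu ∧ (∀ i, nu i ≤ mu i) ∧
      IsHStrip lam nu ∧ a ≤ stripSize lam nu} = ↑(T.image e) := by
    ext nu
    simp only [Set.mem_setOf_eq, Finset.coe_image, Set.mem_image, Finset.mem_coe, hT,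
      Finset.mem_filter, Finset.mem_Iic]
    constructor
    · rintro ⟨hP, hle, hs, haa⟩
      set c : ℕ →₀ ℕ := Finsupp.onFinset (Finset.range N) (fun i => nu i - lam i)
        (by
          intro i hi
          rw [Finset.mem_range]
          by_contra h
          push_neg at h
          have h1 := hle i
          rw [hN i h] at h1
          apply hi
          show nu i - lam i = 0
          omega) with hcdef
      have henu : e c = nu := by
        funext i
        show lam i + (nu i - lam i) = nu i
        exact Nat.add_sub_cancel' (hs.1 i)
      refine ⟨c, ⟨?_, ?_⟩, henu⟩
      · rw [Finsupp.le_def]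
        intro i
        show nu i - lam i ≤ m i
        rw [hmapp]
        exact Nat.sub_le_sub_right (hle i) _
      · rw [← hsize c, henu]; exact haa
    · rintro ⟨c, ⟨hc1, hc2⟩, rfl⟩
      obtain ⟨hP, hle, hs⟩ := hEc c hc1
      exact ⟨hP, hle, hs, by rw [hsize c]; exact hc2⟩
  rw [hset, finsum_mem_coe_finset]
  have hinj : Set.InjOn e ↑T := by
    intro c1 _ c2 _ h
    ext i
    have := congrFun h i
    simp only [he] at this
    omega
  rw [Finset.sum_image (fun x hx y hy h => hinj hx hy h)]
  have hterm : ∀ c ∈ T, (-1 : ℤ) ^ (stripSize lam (e c) - a) *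
      ((stripRows lam (e c) - 1).choose (stripSize lam (e c) - a) : ℤ) = termF a c := by
    intro c hc
    rw [hT, Finset.mem_filter] at hc
    rw [hsize c, hrows c]
    unfold termF
    rw [if_pos hc.2]
  rw [Finset.sum_congr rfl hterm, hT, Finset.sum_filter]
  have : ∀ c ∈ Finset.Iic m, (if a ≤ fsum c then termF a c else 0) = termF a c := by
    intro c _
    unfold termF
    split_ifs with h1 <;> simp
  rw [Finset.sum_congr rfl this, Flem m a ha]
  have hMsize : stripSize lam mu = fsum m := by
    have : mu = e m := by funext i; exact (hmuadd i).symm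
    rw [this, hsize m]
  rw [if_pos (by rw [← hMsize]; exact haM)]
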